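/- arXiv:2106.13745 — 2 statements merged into one kernel-verified Lean document; each statement's English description precedes it below -/
import Mathlib

section
/- Let n ≥ 1 and p > n. Define u : ℝⁿ → ℝ by u(x) = Σ_{j=0}^∞ max(0, 1 - 2^{-j} |x - (4^j, 0, …, 0)|). Then u is Lipschitz on each ball, the function g(x) = Σ_{j=0}^∞ 2^{-j} χ_{B((4^j,0,…,0), 2^j)}(x) is an upper bound for the local Lipschitz constant of u almost everywhere, and ∫_{ℝⁿ} g^p dx = ω_n Σ_{j=0}^∞ 2^{j(n-p)} < ∞, where ω_n is the Lebesgue measure of the unit ball in ℝⁿ. -/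
open MeasureTheory Set Metric ENNReal NNReal

lemma aux_sep (i j : ℕ) (hij : i < j) : (2:ℝ)^i + 2^j ≤ 4^j - 4^i := by
  have h4 : ∀ k : ℕ, (4:ℝ)^k = 2^k * 2^k := by
    intro k; rw [← mul_pow]; norm_num
  have h1 : (1:ℝ) ≤ 2^i := one_le_pow₀ (by norm_num)
  have h2 : (2:ℝ) * 2^i ≤ 2^j := by
    calc (2:ℝ) * 2^i = 2^(i+1) := by ring
    _ ≤ 2^j := pow_le_pow_right₀ (by norm_num) hij
  rw [h4, h4]
  nlinarith [pow_nonneg (by norm_num : (0:ℝ) ≤ 2) i]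

lemma aux_dist_sep (i j : ℕ) (hij : i ≠ j) : (2:ℝ)^i + 2^j ≤ |(4:ℝ)^i - 4^j| := by
  have hpi : (0:ℝ) ≤ 2^i := by positivity
  have hpj : (0:ℝ) ≤ 2^j := by positivity
  rcases hij.lt_or_gt with h | h
  · have hs := aux_sep i j h
    have habs : |(4:ℝ)^i - 4^j| = 4^j - 4^i := by
      rw [abs_sub_comm]; exact abs_of_nonneg (by linarith)
    rw [habs]; linarith
  · have hs := aux_sep j i h
    have habs : |(4:ℝ)^i - 4^j| = 4^i - 4^j := abs_of_nonneg (by linarith)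
    rw [habs]; linarith

lemma aux_nat (j : ℕ) : j + 2^j ≤ 4^j := by
  induction j with
  | zero => simp
  | succ k ih =>
    have h1 : 1 ≤ 2^k := Nat.one_le_two_pow
    have h2 : 2^(k+1) = 2 * 2^k := by ring
    have h3 : 4^(k+1) = 4 * 4^k := by ring
    omega

lemma aux_rpow (n : ℕ) (p : ℝ) (j : ℕ) :
    ((2:ℝ)^j)⁻¹ ^ p * ((2:ℝ)^j)^n = 2 ^ ((j:ℝ)*((n:ℝ)-p)) := by
  rw [← Real.rpow_natCast 2 j, ← Real.rpow_neg (by norm_num),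
    ← Real.rpow_natCast ((2:ℝ) ^ (j:ℝ)) n,
    ← Real.rpow_mul (by norm_num), ← Real.rpow_mul (by norm_num),
    ← Real.rpow_add (by norm_num)]
  ring_nf

theorem tent_function_finite_energy (n : ℕ) (hn : 1 ≤ n) (p : ℝ) (hp : (n : ℝ) < p) :
    let c : ℕ → EuclideanSpace ℝ (Fin n) :=
      fun j => EuclideanSpace.single ⟨0, hn⟩ ((4 : ℝ) ^ j)
    let u : EuclideanSpace ℝ (Fin n) → ℝ :=
      fun x => ∑' j : ℕ, max 0 (1 - dist x (c j) / 2 ^ j)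
    let g : EuclideanSpace ℝ (Fin n) → ℝ :=
      fun x => ∑' j : ℕ, Set.indicator (Metric.ball (c j) (2 ^ j)) (fun _ => ((2 : ℝ) ^ j)⁻¹) x
    -- u is Lipschitz on each ball
    (∀ (x₀ : EuclideanSpace ℝ (Fin n)) (r : ℝ),
        ∃ L : ℝ≥0, LipschitzOnWith L u (Metric.ball x₀ r)) ∧
    -- g bounds the local Lipschitz constant of u a.e.
    (∀ᵐ x ∂(volume : Measure (EuclideanSpace ℝ (Fin n))),
        ∃ ε > (0 : ℝ), ∀ y ∈ Metric.ball x ε, |u y - u x| ≤ g x * dist y x) ∧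
    Summable (fun j : ℕ => (2 : ℝ) ^ ((j : ℝ) * ((n : ℝ) - p))) ∧
    (∫⁻ x, ENNReal.ofReal (g x ^ p) ∂(volume : Measure (EuclideanSpace ℝ (Fin n)))
        = volume (Metric.ball (0 : EuclideanSpace ℝ (Fin n)) 1)
          * ENNReal.ofReal (∑' j : ℕ, (2 : ℝ) ^ ((j : ℝ) * ((n : ℝ) - p)))) ∧
    (∫⁻ x, ENNReal.ofReal (g x ^ p) ∂(volume : Measure (EuclideanSpace ℝ (Fin n))) < ⊤) := by
  intro c u g
  have hpow_pos : ∀ j : ℕ, (0:ℝ) < 2^j := fun j => by positivity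
  have hone_le : ∀ j : ℕ, (1:ℝ) ≤ 2^j := fun j => one_le_pow₀ (by norm_num)
  have hcd : ∀ i j : ℕ, dist (c i) (c j) = |(4:ℝ)^i - 4^j| := by
    intro i j
    simp only [c, EuclideanSpace.dist_single_same, Real.dist_eq]
  have hdisj : ∀ i j : ℕ, i ≠ j →
      Disjoint (Metric.ball (c i) ((2:ℝ)^i)) (Metric.ball (c j) ((2:ℝ)^j)) := by
    intro i j hij
    exact ball_disjoint_ball (by rw [hcd]; exact aux_dist_sep i j hij)
  have hterm_zero : ∀ (x : EuclideanSpace ℝ (Fin n)) (j : ℕ),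
      x ∉ Metric.ball (c j) ((2:ℝ)^j) → max 0 (1 - dist x (c j) / 2^j) = 0 := by
    intro x j hx
    rw [mem_ball, not_lt] at hx
    refine max_eq_left ?_
    rw [sub_nonpos, le_div_iff₀ (hpow_pos j)]
    linarith
  have hu_mem : ∀ (x : EuclideanSpace ℝ (Fin n)) (j : ℕ), x ∈ Metric.ball (c j) ((2:ℝ)^j) →
      u x = max 0 (1 - dist x (c j) / 2^j) := by
    intro x j hx
    exact tsum_eq_single j fun i hij =>
      hterm_zero x i fun hxi => Set.disjoint_left.mp (hdisj i j hij) hxi hx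
  have hu_zero : ∀ x : EuclideanSpace ℝ (Fin n),
      (∀ j, x ∉ Metric.ball (c j) ((2:ℝ)^j)) → u x = 0 := by
    intro x hx
    have h := tsum_congr (L := SummationFilter.unconditional ℕ) (fun j => hterm_zero x j (hx j))
    simpa using h
  have hg_mem : ∀ (x : EuclideanSpace ℝ (Fin n)) (j : ℕ), x ∈ Metric.ball (c j) ((2:ℝ)^j) →
      g x = ((2:ℝ)^j)⁻¹ := by
    intro x j hx
    have h := tsum_eq_single (L := SummationFilter.unconditional ℕ) (f := fun i : ℕ =>
      Set.indicator (Metric.ball (c i) ((2:ℝ)^i)) (fun _ => ((2:ℝ)^i)⁻¹) x) j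
      fun i hij => Set.indicator_of_notMem
        (fun hxi => Set.disjoint_left.mp (hdisj i j hij) hxi hx) _
    simpa [Set.indicator_of_mem hx] using h
  have hg_zero : ∀ x : EuclideanSpace ℝ (Fin n),
      (∀ j, x ∉ Metric.ball (c j) ((2:ℝ)^j)) → g x = 0 := by
    intro x hx
    have h := tsum_congr (L := SummationFilter.unconditional ℕ) (fun j : ℕ => Set.indicator_of_notMem (hx j)
      (fun _ : EuclideanSpace ℝ (Fin n) => ((2:ℝ)^j)⁻¹))
    simpa using h
  have hlip : ∀ (x y : EuclideanSpace ℝ (Fin n)) (j : ℕ),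
      |max 0 (1 - dist y (c j)/2^j) - max 0 (1 - dist x (c j)/2^j)|
        ≤ ((2:ℝ)^j)⁻¹ * dist y x := by
    intro x y j
    set a := 1 - dist y (c j)/2^j with ha
    set b := 1 - dist x (c j)/2^j with hb
    have h := abs_max_sub_max_le_abs a b 0
    rw [max_comm a 0, max_comm b 0] at h
    refine h.trans ?_
    have hab : a - b = (dist x (c j) - dist y (c j))/2^j := by rw [ha, hb]; ring
    rw [hab, abs_div, abs_of_pos (hpow_pos j), div_eq_inv_mul]
    have := abs_dist_sub_le x y (c j)
    rw [dist_comm x y] at this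
    exact mul_le_mul_of_nonneg_left this (by positivity)
  have hf_le : ∀ (x y : EuclideanSpace ℝ (Fin n)) (j : ℕ),
      y ∉ Metric.ball (c j) ((2:ℝ)^j) → max 0 (1 - dist x (c j)/2^j) ≤ dist y x := by
    intro x y j hy
    rw [mem_ball, not_lt] at hy
    refine max_le dist_nonneg ?_
    have htri : dist y (c j) ≤ dist y x + dist x (c j) := dist_triangle _ _ _
    by_cases hc : dist x (c j) ≤ 2^j
    · have he : 1 - dist x (c j)/2^j = (2^j - dist x (c j))/2^j := by
        field_simp
      rw [he]
      have h2 : (2^j - dist x (c j))/2^j ≤ 2^j - dist x (c j) :=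
        div_le_self (by linarith) (hone_le j)
      linarith
    · push_neg at hc
      have : 1 - dist x (c j)/2^j ≤ 0 := by
        rw [sub_nonpos, le_div_iff₀ (hpow_pos j)]
        linarith
      exact this.trans dist_nonneg
  have hulip : ∀ x y : EuclideanSpace ℝ (Fin n), |u y - u x| ≤ 2 * dist y x := by
    intro x y
    have hd : (0:ℝ) ≤ dist y x := dist_nonneg
    by_cases hx : ∃ i, x ∈ Metric.ball (c i) ((2:ℝ)^i)
    · obtain ⟨i, hxi⟩ := hx
      by_cases hy : ∃ j, y ∈ Metric.ball (c j) ((2:ℝ)^j)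
      · obtain ⟨j, hyj⟩ := hy
        by_cases hij : i = j
        · subst hij
          rw [hu_mem x i hxi, hu_mem y i hyj]
          refine (hlip x y i).trans ?_
          have h1 : ((2:ℝ)^i)⁻¹ ≤ 2 := by
            have := hone_le i
            have h2 : ((2:ℝ)^i)⁻¹ ≤ 1 := by
              rw [inv_le_one₀ (hpow_pos i)]; exact this
            linarith
          exact mul_le_mul_of_nonneg_right h1 hd
        · have hyni : y ∉ Metric.ball (c i) ((2:ℝ)^i) :=
            fun h => Set.disjoint_left.mp (hdisj i j hij) h hyj
          have hxnj : x ∉ Metric.ball (c j) ((2:ℝ)^j) :=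
            fun h => Set.disjoint_left.mp (hdisj j i (Ne.symm hij)) h hxi
          rw [hu_mem x i hxi, hu_mem y j hyj]
          have h1 := hf_le x y i hyni
          have h2 := hf_le y x j hxnj
          rw [dist_comm x y] at h2
          have hA0 : (0:ℝ) ≤ max 0 (1 - dist x (c i)/2^i) := le_max_left _ _
          have hB0 : (0:ℝ) ≤ max 0 (1 - dist y (c j)/2^j) := le_max_left _ _
          rw [abs_le]
          constructor <;> linarith
      · push_neg at hy
        rw [hu_zero y hy, hu_mem x i hxi]
        have h1 := hf_le x y i (hy i)
        have hA0 : (0:ℝ) ≤ max 0 (1 - dist x (c i)/2^i) := le_max_left _ _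
        rw [abs_le]
        constructor <;> linarith
    · push_neg at hx
      by_cases hy : ∃ j, y ∈ Metric.ball (c j) ((2:ℝ)^j)
      · obtain ⟨j, hyj⟩ := hy
        rw [hu_zero x hx, hu_mem y j hyj]
        have h1 := hf_le y x j (hx j)
        rw [dist_comm x y] at h1
        have hB0 : (0:ℝ) ≤ max 0 (1 - dist y (c j)/2^j) := le_max_left _ _
        rw [abs_le]
        constructor <;> linarith
      · push_neg at hy
        rw [hu_zero x hx, hu_zero y hy]
        simp only [sub_zero, abs_zero]
        linarith
  have hnontriv : Nontrivial (EuclideanSpace ℝ (Fin n)) := by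
    refine ⟨0, EuclideanSpace.single ⟨0, hn⟩ (1:ℝ), fun h => ?_⟩
    have h1 : ‖EuclideanSpace.single (⟨0, hn⟩ : Fin n) (1:ℝ)‖ = 1 := by
      rw [EuclideanSpace.norm_single]; norm_num
    rw [← h] at h1
    simp at h1
  have hae : ∀ᵐ x ∂(volume : Measure (EuclideanSpace ℝ (Fin n))),
      ∃ ε > (0 : ℝ), ∀ y ∈ Metric.ball x ε, |u y - u x| ≤ g x * dist y x := by
    have hsph : volume (⋃ j : ℕ, Metric.sphere (c j) ((2:ℝ)^j)) = 0 :=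
      measure_iUnion_null fun j => Measure.addHaar_sphere volume _ _
    rw [← compl_mem_ae_iff] at hsph
    filter_upwards [hsph] with x hx
    simp only [Set.mem_compl_iff, Set.mem_iUnion, not_exists, mem_sphere_iff_norm] at hx
    have hx' : ∀ j : ℕ, dist x (c j) ≠ 2^j := by
      intro j
      have := hx j
      rwa [← dist_eq_norm] at this
    by_cases hmem : ∃ j, x ∈ Metric.ball (c j) ((2:ℝ)^j)
    · obtain ⟨j, hj⟩ := hmem
      have hjlt : dist x (c j) < 2^j := mem_ball.mp hj
      refine ⟨2^j - dist x (c j), by linarith, ?_⟩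
      intro y hy
      rw [mem_ball] at hy
      have hyj : y ∈ Metric.ball (c j) ((2:ℝ)^j) := by
        rw [mem_ball]
        have := dist_triangle y x (c j)
        linarith
      rw [hg_mem x j hj, hu_mem x j hj, hu_mem y j hyj]
      exact hlip x y j
    · push_neg at hmem
      have hout : ∀ j : ℕ, (2:ℝ)^j < dist x (c j) := by
        intro j
        have h1 : (2:ℝ)^j ≤ dist x (c j) := not_lt.mp fun h => hmem j (mem_ball.mpr h)
        exact h1.lt_of_ne (Ne.symm (hx' j))
      set N : ℕ := ⌈‖x‖⌉₊ + 1 with hNdef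
      have hNne : (Finset.range N).Nonempty := ⟨0, Finset.mem_range.mpr (Nat.succ_pos _)⟩
      set ε : ℝ := min 1 ((Finset.range N).inf' hNne (fun j => dist x (c j) - 2^j)) with hεdef
      have hε : 0 < ε := by
        refine lt_min one_pos ?_
        rw [Finset.lt_inf'_iff]
        intro j _
        have := hout j
        linarith
      refine ⟨ε, hε, ?_⟩
      intro y hy
      rw [mem_ball] at hy
      have hε1 : ε ≤ 1 := min_le_left _ _
      have hyout : ∀ j : ℕ, y ∉ Metric.ball (c j) ((2:ℝ)^j) := by
        intro j hyj
        rw [mem_ball] at hyj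
        have htri : dist x (c j) ≤ dist x y + dist y (c j) := dist_triangle _ _ _
        rw [dist_comm x y] at htri
        by_cases hjN : j < N
        · have h1 : ε ≤ dist x (c j) - 2^j :=
            (min_le_right _ _).trans (Finset.inf'_le _ (Finset.mem_range.mpr hjN))
          linarith
        · push_neg at hjN
          have hjx : ‖x‖ + 1 ≤ (j:ℝ) := by
            have h1 : (N:ℝ) ≤ (j:ℝ) := Nat.cast_le.mpr hjN
            have h2 : ‖x‖ ≤ (⌈‖x‖⌉₊ : ℝ) := Nat.le_ceil _
            rw [hNdef] at h1
            push_cast at h1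
            linarith
          have hcj : (4:ℝ)^j ≤ dist x (c j) + ‖x‖ := by
            have htri2 : dist (c j) 0 ≤ dist (c j) x + dist x 0 := dist_triangle _ _ _
            have h0 : dist (c j) (0 : EuclideanSpace ℝ (Fin n)) = (4:ℝ)^j := by
              rw [dist_zero_right]
              simp only [c, EuclideanSpace.norm_single]
              rw [Real.norm_eq_abs, abs_of_pos (by positivity)]
            rw [h0, dist_comm (c j) x, dist_zero_right] at htri2
            linarith
          have hj2 : (j:ℝ) + 2^j ≤ 4^j := by
            have := aux_nat j
            exact_mod_cast this
          linarith
      rw [hu_zero y hyout, hu_zero x hmem, hg_zero x hmem]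
      simp
  have hsummable : Summable (fun j : ℕ => (2 : ℝ) ^ ((j : ℝ) * ((n : ℝ) - p))) := by
    have hlt : (2:ℝ) ^ ((n:ℝ) - p) < 1 :=
      Real.rpow_lt_one_of_one_lt_of_neg one_lt_two (by linarith)
    have hnn : (0:ℝ) ≤ (2:ℝ) ^ ((n:ℝ) - p) := Real.rpow_nonneg (by norm_num) _
    refine (summable_geometric_of_lt_one hnn hlt).congr fun j => ?_
    rw [← Real.rpow_natCast ((2:ℝ) ^ ((n:ℝ) - p)) j, ← Real.rpow_mul (by norm_num), mul_comm]
  have hppos : (0:ℝ) < p := by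
    have h1 : (1:ℝ) ≤ (n:ℝ) := by exact_mod_cast hn
    linarith
  have hmeasb : ∀ j : ℕ, MeasurableSet (Metric.ball (c j) ((2:ℝ)^j)) :=
    fun j => measurableSet_ball
  have hgp : ∀ x : EuclideanSpace ℝ (Fin n), ENNReal.ofReal (g x ^ p)
      = ∑' j : ℕ, (Metric.ball (c j) ((2:ℝ)^j)).indicator
          (fun _ => ENNReal.ofReal ((((2:ℝ)^j)⁻¹) ^ p)) x := by
    intro x
    by_cases hx : ∃ j, x ∈ Metric.ball (c j) ((2:ℝ)^j)
    · obtain ⟨j, hj⟩ := hx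
      rw [hg_mem x j hj]
      rw [tsum_eq_single j fun i hij => Set.indicator_of_notMem
        (fun hxi => Set.disjoint_left.mp (hdisj i j hij) hxi hj) _]
      rw [Set.indicator_of_mem hj]
    · push_neg at hx
      rw [hg_zero x hx, Real.zero_rpow hppos.ne', ENNReal.ofReal_zero]
      symm
      rw [tsum_congr fun j => Set.indicator_of_notMem (hx j)
        (fun _ => ENNReal.ofReal ((((2:ℝ)^j)⁻¹) ^ p))]
      exact tsum_zero
  have hvol : ∀ j : ℕ, volume (Metric.ball (c j) ((2:ℝ)^j))
      = ENNReal.ofReal (((2:ℝ)^j)^n)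
        * volume (Metric.ball (0 : EuclideanSpace ℝ (Fin n)) 1) := by
    intro j
    rw [Measure.addHaar_ball volume (c j) (by positivity : (0:ℝ) ≤ 2^j),
      finrank_euclideanSpace_fin]
  have hint_eq : (∫⁻ x, ENNReal.ofReal (g x ^ p)
        ∂(volume : Measure (EuclideanSpace ℝ (Fin n))))
      = volume (Metric.ball (0 : EuclideanSpace ℝ (Fin n)) 1)
        * ENNReal.ofReal (∑' j : ℕ, (2 : ℝ) ^ ((j : ℝ) * ((n : ℝ) - p))) := by
    rw [lintegral_congr hgp,
      lintegral_tsum fun j => (measurable_const.indicator (hmeasb j)).aemeasurable]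
    rw [tsum_congr fun j => by
      rw [lintegral_indicator_const (hmeasb j), hvol j, ← mul_assoc,
        ← ENNReal.ofReal_mul (by positivity), aux_rpow n p j]]
    rw [ENNReal.tsum_mul_right,
      ENNReal.ofReal_tsum_of_nonneg (fun j => Real.rpow_nonneg (by norm_num) _) hsummable,
      mul_comm]
  refine ⟨fun x₀ r => ⟨2, ?_⟩, hae, hsummable, hint_eq, ?_⟩
  · have hL : LipschitzWith 2 u := by
      refine LipschitzWith.of_dist_le_mul fun a b => ?_
      rw [Real.dist_eq]
      have h1 := hulip b a
      have h2 : ((2:ℝ≥0) : ℝ) = 2 := by norm_num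
      rw [h2]
      linarith
    exact hL.lipschitzOnWith
  · rw [hint_eq]
    exact ENNReal.mul_lt_top measure_ball_lt_top ENNReal.ofReal_lt_top
end

section
/- Let n ≥ 1 and define u : ℝⁿ → ℝ by u(x) = Σ_{j=0}^∞ max(0, 1 - 2^{-j} |x - (4^j, 0, …, 0)|). Then both sets {x : u(x) = 0} and {x : u(x) > 1/2} have infinite Lebesgue measure. Consequently, for every constant c ∈ ℝ, the function u - c is not in L^p(ℝⁿ) for any p < ∞. -/
open MeasureTheory Set Metric ENNReal

lemma coord_dist_le {n : ℕ} (x y : EuclideanSpace ℝ (Fin n)) (i : Fin n) :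
    dist (x i) (y i) ≤ dist x y := by
  rw [EuclideanSpace.dist_eq]
  have h1 : dist (x i) (y i) = Real.sqrt (dist (x i) (y i) ^ 2) :=
    (Real.sqrt_sq dist_nonneg).symm
  rw [h1]
  exact Real.sqrt_le_sqrt (Finset.single_le_sum (f := fun j => dist (x j) (y j) ^ 2) (fun j _ => sq_nonneg _) (Finset.mem_univ i))

lemma volume_eq_top_of_balls {n : ℕ} (hn : 1 ≤ n) (s : Set (EuclideanSpace ℝ (Fin n)))
    (h : ∀ R : ℝ, 1 ≤ R → ∃ x, ball x R ⊆ s) : volume s = ⊤ := by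
  haveI : Nonempty (Fin n) := ⟨⟨0, hn⟩⟩
  haveI : Nontrivial (EuclideanSpace ℝ (Fin n)) :=
    inferInstance
  have hVpos : 0 < volume (ball (0 : EuclideanSpace ℝ (Fin n)) 1) :=
    measure_ball_pos _ _ one_pos
  have hVlt : volume (ball (0 : EuclideanSpace ℝ (Fin n)) 1) < ⊤ := measure_ball_lt_top
  set b : ℝ := (volume (ball (0 : EuclideanSpace ℝ (Fin n)) 1)).toReal with hb
  have hbpos : 0 < b := ENNReal.toReal_pos hVpos.ne' hVlt.ne
  apply ENNReal.eq_top_of_forall_nnreal_le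
  intro M
  set R : ℝ := max 1 ((M : ℝ) / b) with hR
  have hR1 : 1 ≤ R := le_max_left _ _
  obtain ⟨x, hx⟩ := h R hR1
  have hball : volume (ball x R) = ENNReal.ofReal (R ^ n) * volume (ball (0 : EuclideanSpace ℝ (Fin n)) 1) := by
    rw [Measure.addHaar_ball _ _ (by linarith)]
    congr 1
    exact congrArg _ (congrArg _ finrank_euclideanSpace_fin)
  have hcoe : volume (ball (0 : EuclideanSpace ℝ (Fin n)) 1) = ENNReal.ofReal b :=
    (ENNReal.ofReal_toReal hVlt.ne).symm
  have hMle : (M : ℝ) ≤ R ^ n * b := by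
    have h1 : (M : ℝ) / b ≤ R := le_max_right _ _
    have h2 : R ≤ R ^ n := le_self_pow₀ (by linarith) (by omega)
    calc (M : ℝ) = (M : ℝ) / b * b := by field_simp
      _ ≤ R * b := by nlinarith
      _ ≤ R ^ n * b := by nlinarith
  calc (M : ℝ≥0∞) = ENNReal.ofReal (M : ℝ) := by simp
    _ ≤ ENNReal.ofReal (R ^ n * b) := ENNReal.ofReal_le_ofReal hMle
    _ = ENNReal.ofReal (R ^ n) * ENNReal.ofReal b := ENNReal.ofReal_mul (by positivity)
    _ = volume (ball x R) := by rw [hball, hcoe]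
    _ ≤ volume s := measure_mono hx

theorem tent_function_not_Lp (n : ℕ) (hn : 1 ≤ n) :
    let c : ℕ → EuclideanSpace ℝ (Fin n) :=
      fun j => EuclideanSpace.single ⟨0, hn⟩ ((4 : ℝ) ^ j)
    let u : EuclideanSpace ℝ (Fin n) → ℝ :=
      fun x => ∑' j : ℕ, max 0 (1 - dist x (c j) / 2 ^ j)
    volume {x : EuclideanSpace ℝ (Fin n) | u x = 0} = ⊤ ∧
      volume {x : EuclideanSpace ℝ (Fin n) | 1 / 2 < u x} = ⊤ ∧
      ∀ (c' : ℝ) (p : ℝ), 0 < p →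
        ¬ MeasureTheory.MemLp (fun x => u x - c') (ENNReal.ofReal p)
            (volume : Measure (EuclideanSpace ℝ (Fin n))) := by
  intro c u
  set i0 : Fin n := ⟨0, hn⟩ with hi0
  set t : ℕ → EuclideanSpace ℝ (Fin n) → ℝ :=
    fun j x => max 0 (1 - dist x (c j) / 2 ^ j) with ht
  have hu : ∀ x, u x = ∑' j, t j x := fun x => rfl
  have hcapp : ∀ j, c j i0 = (4 : ℝ) ^ j := by
    intro j
    show EuclideanSpace.single i0 ((4:ℝ)^j) i0 = _
    rw [EuclideanSpace.single_apply, if_pos rfl]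
  -- tent vanishes far away
  have ht_zero : ∀ j x, (2:ℝ) ^ j ≤ dist x (c j) → t j x = 0 := by
    intro j x hd
    apply max_eq_left
    have h2 : (0:ℝ) < 2 ^ j := by positivity
    rw [sub_nonpos, le_div_iff₀ h2]
    linarith
  -- distance between centers
  have hcc : ∀ j k : ℕ, j ≠ k → (2:ℝ) ^ j + 2 ^ k ≤ dist (c j) (c k) := by
    have key : ∀ j k : ℕ, j < k → (2:ℝ) ^ j + 2 ^ k ≤ 4 ^ k - 4 ^ j := by
      intro j k hjk
      obtain ⟨m, rfl⟩ : ∃ m, k = j + m + 1 := ⟨k - j - 1, by omega⟩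
      have h1 : (2:ℝ) ^ j ≤ 4 ^ j := pow_le_pow_left₀ (by norm_num) (by norm_num) j
      have h2 : (2:ℝ) ^ m ≤ 4 ^ m := pow_le_pow_left₀ (by norm_num) (by norm_num) m
      have h3 : (1:ℝ) ≤ 2 ^ m := one_le_pow₀ (by norm_num)
      have h4 : (0:ℝ) < 2 ^ j := by positivity
      have h5 : (0:ℝ) < 4 ^ j := by positivity
      rw [pow_add, pow_add, pow_add, pow_add, pow_one, pow_one]
      nlinarith
    intro j k hjk
    have hd : dist (c j) (c k) = |(4:ℝ) ^ j - 4 ^ k| := by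
      show dist (EuclideanSpace.single i0 ((4:ℝ)^j)) (EuclideanSpace.single i0 ((4:ℝ)^k)) = _
      rw [EuclideanSpace.dist_single_same, Real.dist_eq]
    rcases lt_or_gt_of_ne hjk with h | h
    · have := key j k h
      have h4 : (4:ℝ) ^ j ≤ 4 ^ k := by
        apply pow_le_pow_right₀ (by norm_num) h.le
      rw [hd, abs_of_nonpos (by linarith)]
      linarith
    · have := key k j h
      have h4 : (4:ℝ) ^ k ≤ 4 ^ j := by
        apply pow_le_pow_right₀ (by norm_num) h.le
      rw [hd, abs_of_nonneg (by linarith)]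
      linarith
  -- u on the ball around c j
  have hu_ball : ∀ j x, dist x (c j) < 2 ^ j / 2 → u x = t j x := by
    intro j x hx
    rw [hu]
    apply tsum_eq_single
    intro k hk
    apply ht_zero
    have h1 := hcc j k (fun h => hk (h.symm ▸ rfl))
    have h2 := dist_triangle (c j) x (c k)
    have h3 : (0:ℝ) < 2 ^ j := by positivity
    have h4 : dist (c j) x = dist x (c j) := dist_comm _ _
    linarith
  -- first part: u = 0 on the left halfspace
  have h_halfspace : ∀ x : EuclideanSpace ℝ (Fin n), x i0 < 0 → u x = 0 := by
    intro x hx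
    have hz : ∀ j, t j x = 0 := by
      intro j
      apply ht_zero
      have h1 : dist (x i0) (c j i0) ≤ dist x (c j) := coord_dist_le x (c j) i0
      rw [hcapp j, Real.dist_eq] at h1
      have h2 : (2:ℝ) ^ j ≤ 4 ^ j := pow_le_pow_left₀ (by norm_num) (by norm_num) j
      have hp4 : (0:ℝ) < 4 ^ j := by positivity
      have h3 : (4:ℝ) ^ j ≤ |x i0 - 4 ^ j| := by
        rw [abs_sub_comm, abs_of_nonneg (by linarith)]
        linarith
      linarith
    rw [hu]
    calc (∑' j, t j x) = ∑' _ : ℕ, (0:ℝ) := tsum_congr hz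
      _ = 0 := tsum_zero
  have part1 : volume {x : EuclideanSpace ℝ (Fin n) | u x = 0} = ⊤ := by
    apply volume_eq_top_of_balls hn
    intro R hR
    refine ⟨EuclideanSpace.single i0 (-(R+1)), fun y hy => ?_⟩
    apply h_halfspace
    have h1 : dist (y i0) (EuclideanSpace.single i0 (-(R+1)) i0) ≤ dist y _ :=
      coord_dist_le y _ i0
    have h2 : EuclideanSpace.single i0 (-(R+1)) i0 = -(R+1) := by
      rw [EuclideanSpace.single_apply, if_pos rfl]
    rw [h2, Real.dist_eq] at h1
    have h3 : dist y (EuclideanSpace.single i0 (-(R+1))) < R := mem_ball.mp hy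
    have := abs_lt.mp (lt_of_le_of_lt h1 h3)
    linarith [this.2]
  have part2 : volume {x : EuclideanSpace ℝ (Fin n) | 1 / 2 < u x} = ⊤ := by
    apply volume_eq_top_of_balls hn
    intro R hR
    obtain ⟨j, hj⟩ := pow_unbounded_of_one_lt (R := ℝ) (2 * R) one_lt_two
    refine ⟨c j, fun y hy => ?_⟩
    have hyd : dist y (c j) < 2 ^ j / 2 := by
      have := mem_ball.mp hy
      linarith
    have h3 : (0:ℝ) < 2 ^ j := by positivity
    have hdd : dist y (c j) / 2 ^ j < 1 / 2 := by
      rw [div_lt_iff₀ h3]; linarith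
    have hval : 1 / 2 < 1 - dist y (c j) / 2 ^ j := by linarith
    show 1 / 2 < u y
    rw [hu_ball j y hyd]
    exact lt_of_lt_of_le hval (le_max_right _ _)
  refine ⟨part1, part2, ?_⟩
  intro c' p hp hmem
  have hP0 : ENNReal.ofReal p ≠ 0 := (ENNReal.ofReal_pos.mpr hp).ne'
  have hfin := hmem.meas_ge_lt_top hP0 ENNReal.ofReal_ne_top
    (ε := (1/4 : NNReal)) (by norm_num)
  -- a set of infinite measure where |u x - c'| ≥ 1/4
  obtain ⟨S, hS_top, hS_ge⟩ :
      ∃ S : Set (EuclideanSpace ℝ (Fin n)), volume S = ⊤ ∧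
        ∀ x ∈ S, (1/4 : ℝ) ≤ |u x - c'| := by
    by_cases hc' : c' ≤ 1/4
    · refine ⟨{x | 1 / 2 < u x}, part2, fun x hx => ?_⟩
      have : (1/4:ℝ) ≤ u x - c' := by
        have := hx
        simp only [mem_setOf_eq] at this
        linarith
      exact this.trans (le_abs_self _)
    · refine ⟨{x | u x = 0}, part1, fun x hx => ?_⟩
      have hux : u x = 0 := hx
      rw [hux, zero_sub, abs_neg, abs_of_nonneg (by linarith)]
      linarith
  have hsub : S ⊆ {x | (1/4 : NNReal) ≤ ‖u x - c'‖₊} := by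
    intro x hx
    have := hS_ge x hx
    simp only [mem_setOf_eq, ← NNReal.coe_le_coe, coe_nnnorm, Real.norm_eq_abs]
    exact_mod_cast this
  have : (⊤ : ℝ≥0∞) ≤ volume {x : EuclideanSpace ℝ (Fin n) | (1/4 : NNReal) ≤ ‖u x - c'‖₊} :=
    hS_top ▸ measure_mono hsub
  exact absurd (lt_of_le_of_lt this hfin) (lt_irrefl _)
end
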